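/- There exists a nonempty, closed and geodesically convex subset of ℝ³_∞ that is not hyperconvex (with the induced metric); for example, the plane L = {(x,y,z) ∈ ℝ³ : x + y + z = 0} is such a set. Hence the statement 'every nonempty closed geodesically convex subset is hyperconvex', which holds in ℝ²_∞, fails in ℝ³_∞. -/

import Mathlib

/-- A geodesic from `p` to `q` in a metric space: an isometric embedding of the
real interval `[0, dist p q]` sending `0` to `p` and `dist p q` to `q`. -/
def IsGeodesic {X : Type*} [MetricSpace X] (p q : X) (γ : ℝ → X) : Prop :=
  γ 0 = p ∧ γ (dist p q) = q ∧
    ∀ s ∈ Set.Icc (0 : ℝ) (dist p q), ∀ t ∈ Set.Icc (0 : ℝ) (dist p q),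
      dist (γ s) (γ t) = |s - t|

/-- A subset `A` is geodesically convex if any two of its points are joined by a
geodesic of the ambient space whose image lies in `A`. -/
def GeodConvex {X : Type*} [MetricSpace X] (A : Set X) : Prop :=
  ∀ p ∈ A, ∀ q ∈ A, ∃ γ : ℝ → X, IsGeodesic p q γ ∧
    ∀ t ∈ Set.Icc (0 : ℝ) (dist p q), γ t ∈ A

/-- A metric space is hyperconvex if every family of closed balls whose radii
satisfy the pairwise condition `dist (x i) (x j) ≤ r i + r j` has nonempty
intersection. -/
def Hyperconvex (X : Type*) [MetricSpace X] : Prop :=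
  ∀ (ι : Type) (x : ι → X) (r : ι → ℝ),
    (∀ i, 0 ≤ r i) → (∀ i j, dist (x i) (x j) ≤ r i + r j) →
    (⋂ i, {y : X | dist (x i) y ≤ r i}).Nonempty

/-- There is a nonempty, closed, geodesically convex subset of `ℝ³_∞` that is
not hyperconvex with the induced metric; the plane `x + y + z = 0` is an
example. So the two-dimensional theorem fails in `ℝ³_∞`. -/
theorem exists_closed_geodConvex_not_hyperconvex :
    ∃ A : Set (Fin 3 → ℝ), A = {v : Fin 3 → ℝ | v 0 + v 1 + v 2 = 0} ∧
      A.Nonempty ∧ IsClosed A ∧ GeodConvex A ∧ ¬ Hyperconvex ↥A := by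
  refine ⟨{v : Fin 3 → ℝ | v 0 + v 1 + v 2 = 0}, rfl, ⟨0, by simp⟩, ?_, ?_, ?_⟩
  · have : {v : Fin 3 → ℝ | v 0 + v 1 + v 2 = 0}
        = (fun v : Fin 3 → ℝ => v 0 + v 1 + v 2) ⁻¹' {0} := by
      ext v; simp
    rw [this]
    exact IsClosed.preimage (by fun_prop) isClosed_singleton
  · intro p hp q hq
    set d := dist p q with hd
    have hd0 : 0 ≤ d := dist_nonneg
    refine ⟨fun t => p + (t / d) • (q - p), ⟨?_, ?_, ?_⟩, ?_⟩
    · simp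
    · show p + (d / d) • (q - p) = q
      by_cases h0 : d = 0
      · have hpq : p = q := dist_eq_zero.mp h0
        rw [hpq]; simp
      · rw [div_self h0, one_smul]; abel
    · intro s hs t ht
      show dist (p + (s / d) • (q - p)) (p + (t / d) • (q - p)) = |s - t|
      have hnorm : ‖q - p‖ = d := by rw [← dist_eq_norm, dist_comm]
      have key : (p + (s / d) • (q - p)) - (p + (t / d) • (q - p))
          = ((s - t) / d) • (q - p) := by
        rw [sub_div, sub_smul]; abel
      rw [dist_eq_norm, key, norm_smul, hnorm]
      by_cases h0 : d = 0
      · rw [← hd, h0] at hs ht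
        have hs0 : s = 0 := le_antisymm hs.2 hs.1
        have ht0 : t = 0 := le_antisymm ht.2 ht.1
        rw [h0]
        simp [hs0, ht0]
      · rw [Real.norm_eq_abs, abs_div, abs_of_nonneg hd0,
          div_mul_cancel₀ _ h0]
    · intro t _
      show (p + (t / d) • (q - p)) 0 + (p + (t / d) • (q - p)) 1
          + (p + (t / d) • (q - p)) 2 = 0
      simp only [Pi.add_apply, Pi.smul_apply, Pi.sub_apply, smul_eq_mul]
      have hp' : p 0 + p 1 + p 2 = 0 := hp
      have hq' : q 0 + q 1 + q 2 = 0 := hq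
      linear_combination (1 - t / d) * hp' + (t / d) * hq'
  · intro hyp
    set A : Set (Fin 3 → ℝ) := {v : Fin 3 → ℝ | v 0 + v 1 + v 2 = 0} with hA
    let a : Fin 3 → Fin 3 → ℝ := ![![1, 1, -2], ![1, -2, 1], ![-2, 1, 1]]
    have hbnd : ∀ i k, -2 ≤ a i k ∧ a i k ≤ 1 := by
      intro i k
      fin_cases i <;> fin_cases k <;> norm_num [a]
    have hmem : ∀ i, a i ∈ A := by
      intro i
      fin_cases i <;> simp [A, a] <;> norm_num
    set x : Fin 3 → ↥A := fun i => ⟨a i, hmem i⟩ with hx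
    have hdist : ∀ i j, dist (x i) (x j) ≤ (3 : ℝ) := by
      intro i j
      rw [Subtype.dist_eq]
      rw [dist_pi_le_iff (by norm_num)]
      intro k
      rw [Real.dist_eq, abs_le]
      have h1 := hbnd i k
      have h2 := hbnd j k
      constructor <;> linarith [h1.1, h1.2, h2.1, h2.2]
    obtain ⟨y, hy⟩ := hyp (Fin 3) x (fun _ => 3 / 2) (fun _ => by norm_num)
      (fun i j => by simpa using hdist i j)
    simp only [Set.mem_iInter, Set.mem_setOf_eq] at hy
    have hcomp : ∀ i k, |a i k - (y : Fin 3 → ℝ) k| ≤ 3 / 2 := by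
      intro i k
      have hyi : dist (a i) (y : Fin 3 → ℝ) ≤ 3 / 2 := by
        have := hy i
        rwa [Subtype.dist_eq] at this
      have := (dist_le_pi_dist (a i) (y : Fin 3 → ℝ) k).trans hyi
      rwa [Real.dist_eq] at this
    have h0 := abs_le.mp (hcomp 2 0)
    have h1 := abs_le.mp (hcomp 1 1)
    have h2 := abs_le.mp (hcomp 0 2)
    have hy0 : (y : Fin 3 → ℝ) 0 + (y : Fin 3 → ℝ) 1 + (y : Fin 3 → ℝ) 2 = 0 := y.2
    have e0 : a 2 0 = -2 := rfl
    have e1 : a 1 1 = -2 := by norm_num [a]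
    have e2 : a 0 2 = -2 := rfl
    rw [e0] at h0; rw [e1] at h1; rw [e2] at h2
    linarith [h0.1, h1.1, h2.1]
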